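/- Let m ≥ 1, k ∈ {1,…,m−1}, and let A ⊆ {1,…,2^m−1} be a set of 2^k consecutive integers. Let x₁, x₂ ∈ A with φ₂(x₁) < φ₂(x₂) such that no element n ∈ A satisfies φ₂(x₁) < φ₂(n) < φ₂(x₂). Then φ₂(x₂) − φ₂(x₁) ∈ {1/2^k} ∪ {1/2^{k−1} − 3/2^l : l = k+1,…,m} ∪ {3/2^l : l = k+1,…,m}. Moreover, there exist x, x' ∈ A with φ₂(x) ≤ 2^{−k} and 1 − φ₂(x') ≤ 2^{−k}. -/

import Mathlib

/-- The `i`-th digit (1-based) of `n` in base `b`, with the convention that the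
`0`-th digit is `0`. -/
def nthDigit (b n i : ℕ) : ℕ := if i = 0 then 0 else n / b ^ (i - 1) % b
/-- The radical-inverse (digit-reversal) function in base `b`, using `m` digits:
`φ_b(n) = e₁/b + e₂/b² + ⋯ + e_m/b^m`. -/
noncomputable def radInv (b m n : ℕ) : ℝ :=
  ∑ i ∈ Finset.Icc 1 m, (nthDigit b n i : ℝ) / (b : ℝ) ^ i

def rev : ℕ → ℕ → ℕ
  | 0, _ => 0
  | m + 1, n => n % 2 * 2 ^ m + rev m (n / 2)

lemma radInv_range (m n : ℕ) :
    radInv 2 m n = ∑ i ∈ Finset.range m, ((n / 2 ^ i % 2 : ℕ) : ℝ) / 2 ^ (i + 1) := by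
  rw [radInv, ← Finset.Ico_add_one_right_eq_Icc, Finset.sum_Ico_eq_sum_range]
  simp [nthDigit, add_comm]

lemma radInv_succ (m n : ℕ) :
    radInv 2 (m + 1) n = ((n % 2 : ℕ) : ℝ) / 2 + radInv 2 m (n / 2) / 2 := by
  rw [radInv_range, radInv_range, Finset.sum_range_succ', Finset.sum_div, add_comm]
  congr 1
  · norm_num
  · apply Finset.sum_congr rfl
    intro i _
    rw [Nat.div_div_eq_div_mul]
    rw [show 2 * 2 ^ i = 2 ^ (i+1) by ring]
    rw [div_div]
    norm_num
    ring

lemma radInv_eq_rev (m n : ℕ) : radInv 2 m n = (rev m n : ℝ) / 2 ^ m := by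
  induction m generalizing n with
  | zero => simp [radInv, rev]
  | succ m ih =>
    rw [radInv_succ, ih, rev]
    push_cast
    field_simp
    ring

lemma rev_lt (m n : ℕ) : rev m n < 2 ^ m := by
  induction m generalizing n with
  | zero => simp [rev]
  | succ m ih =>
    have h1 : n % 2 ≤ 1 := Nat.le_of_lt_succ (Nat.mod_lt n (by norm_num))
    have h2 := ih (n / 2)
    have : rev (m+1) n = n % 2 * 2 ^ m + rev m (n / 2) := rfl
    rw [this, pow_succ]
    nlinarith

lemma rev_zero (m : ℕ) : rev m 0 = 0 := by
  induction m with
  | zero => rfl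
  | succ m ih => show 0 % 2 * 2 ^ m + rev m (0 / 2) = 0; simp [ih]

lemma rev_inj (m : ℕ) : ∀ n₁ < 2 ^ m, ∀ n₂ < 2 ^ m, rev m n₁ = rev m n₂ → n₁ = n₂ := by
  induction m with
  | zero => intro n₁ h1 n₂ h2 _; omega
  | succ m ih =>
    intro n₁ h1 n₂ h2 h
    have e : ∀ n, rev (m+1) n = n % 2 * 2 ^ m + rev m (n / 2) := fun _ => rfl
    rw [e, e] at h
    have b1 : rev m (n₁ / 2) < 2 ^ m := rev_lt m _
    have b2 : rev m (n₂ / 2) < 2 ^ m := rev_lt m _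
    have hm : n₁ % 2 = n₂ % 2 ∧ rev m (n₁ / 2) = rev m (n₂ / 2) := by
      rcases Nat.mod_two_eq_zero_or_one n₁ with h₁ | h₁ <;>
      rcases Nat.mod_two_eq_zero_or_one n₂ with h₂ | h₂ <;>
      simp [h₁, h₂] at h ⊢ <;> omega
    have d1 : n₁ / 2 < 2 ^ m := by
      rw [pow_succ] at h1; omega
    have d2 : n₂ / 2 < 2 ^ m := by
      rw [pow_succ] at h2; omega
    have := ih _ d1 _ d2 hm.2
    omega

lemma rev_split (k : ℕ) : ∀ m, k ≤ m → ∀ n,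
    rev m n = rev k (n % 2 ^ k) * 2 ^ (m - k) + rev (m - k) (n / 2 ^ k) := by
  induction k with
  | zero => intro m _ n; simp [rev]
  | succ k ih =>
    intro m hm n
    obtain ⟨m₀, rfl⟩ : ∃ m₀, m = m₀ + 1 := ⟨m - 1, by omega⟩
    have hk : k ≤ m₀ := by omega
    have e : ∀ s x, rev (s+1) x = x % 2 * 2 ^ s + rev s (x / 2) := fun _ _ => rfl
    rw [e, ih m₀ hk (n / 2)]
    have h1 : n % 2 ^ (k+1) % 2 = n % 2 := Nat.mod_mod_of_dvd n (dvd_pow_self 2 (by omega))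
    have h2 : n % 2 ^ (k+1) / 2 = n / 2 % 2 ^ k := by
      rw [pow_succ', Nat.mod_mul_right_div_self]
    have h3 : n / 2 / 2 ^ k = n / 2 ^ (k+1) := by
      rw [Nat.div_div_eq_div_mul, pow_succ']
    rw [e k (n % 2 ^ (k+1)), h1, h2, h3]
    have h4 : m₀ + 1 - (k + 1) = m₀ - k := by omega
    rw [h4, add_mul, mul_assoc]
    have : (2:ℕ) ^ k * 2 ^ (m₀ - k) = 2 ^ m₀ := by
      rw [← pow_add]; congr 1; omega
    rw [this, add_assoc]

lemma rev_surj (k : ℕ) : ∀ j < 2 ^ k, ∃ c < 2 ^ k, rev k c = j := by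
  induction k with
  | zero => intro j hj; exact ⟨0, by norm_num, by simp [rev]; omega⟩
  | succ k ih =>
    intro j hj
    have e : ∀ x, rev (k+1) x = x % 2 * 2 ^ k + rev k (x / 2) := fun _ => rfl
    by_cases h : j < 2 ^ k
    · obtain ⟨c, hc, hrc⟩ := ih j h
      refine ⟨2 * c, by rw [pow_succ]; omega, ?_⟩
      rw [e]
      simp [Nat.mul_div_cancel_left c (by norm_num : 0 < 2), hrc]
    · obtain ⟨c, hc, hrc⟩ := ih (j - 2 ^ k) (by rw [pow_succ] at hj; omega)
      refine ⟨2 * c + 1, by rw [pow_succ]; omega, ?_⟩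
      rw [e]
      have : (2 * c + 1) / 2 = c := by omega
      have h2 : (2 * c + 1) % 2 = 1 := by omega
      rw [this, h2, hrc]
      omega

lemma rev_pow (t : ℕ) : rev (t + 1) (2 ^ t) = 1 := by
  induction t with
  | zero => rfl
  | succ t ih =>
    have e : rev (t+2) (2^(t+1)) = 2^(t+1) % 2 * 2 ^ (t+1) + rev (t+1) (2^(t+1) / 2) := rfl
    rw [e]
    have h1 : 2 ^ (t+1) % 2 = 0 := by
      rw [pow_succ]; omega
    have h2 : 2 ^ (t+1) / 2 = 2 ^ t := by
      rw [pow_succ]; omega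
    rw [h1, h2, ih]; ring

lemma rev_pred_pow (t : ℕ) : rev (t + 1) (2 ^ t - 1) + 2 = 2 ^ (t + 1) := by
  induction t with
  | zero => rfl
  | succ t ih =>
    have e : rev (t+2) (2^(t+1)-1) = (2^(t+1)-1) % 2 * 2 ^ (t+1) + rev (t+1) ((2^(t+1)-1) / 2) := rfl
    have hp : (2:ℕ) ^ (t+1) = 2 * 2 ^ t := by rw [pow_succ']
    have hpos : (1:ℕ) ≤ 2 ^ t := Nat.one_le_two_pow
    have h1 : (2^(t+1)-1) % 2 = 1 := by omega
    have h2 : (2^(t+1)-1) / 2 = 2 ^ t - 1 := by omega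
    rw [e, h1, h2]
    have hp2 : (2:ℕ) ^ (t+2) = 2 * 2 ^ (t+1) := by rw [pow_succ']
    omega

lemma rev_all_ones (k : ℕ) : rev k (2 ^ k - 1) + 1 = 2 ^ k := by
  induction k with
  | zero => rfl
  | succ k ih =>
    have e : rev (k+1) (2^(k+1)-1) = (2^(k+1)-1) % 2 * 2 ^ k + rev k ((2^(k+1)-1) / 2) := rfl
    have hp : (2:ℕ) ^ (k+1) = 2 * 2 ^ k := by rw [pow_succ']
    have hpos : (1:ℕ) ≤ 2 ^ k := Nat.one_le_two_pow
    have h1 : (2^(k+1)-1) % 2 = 1 := by omega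
    have h2 : (2^(k+1)-1) / 2 = 2 ^ k - 1 := by omega
    rw [e, h1, h2]
    omega

/-- every residue class mod 2^k is hit by some element of [a, a+2^k) -/
lemma exists_residue (a k c : ℕ) (hc : c < 2 ^ k) :
    ∃ n, a ≤ n ∧ n < a + 2 ^ k ∧ n % 2 ^ k = c := by
  set q := a / 2 ^ k with hq
  set r := a % 2 ^ k with hr
  have har : a = 2 ^ k * q + r := (Nat.div_add_mod a (2^k)).symm ▸ by omega
  have hrlt : r < 2 ^ k := Nat.mod_lt a (Nat.pow_pos (by norm_num))
  have hmul : 2 ^ k * (q + 1) = 2 ^ k * q + 2 ^ k := by ring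
  by_cases h : r ≤ c
  · exact ⟨2 ^ k * q + c, by omega, by omega, by simp [Nat.mul_add_mod, Nat.mod_eq_of_lt hc]⟩
  · exact ⟨2 ^ k * (q + 1) + c, by omega, by omega, by simp [Nat.mul_add_mod, Nat.mod_eq_of_lt hc]⟩

lemma radInv_lt_iff (m x y : ℕ) : radInv 2 m x < radInv 2 m y ↔ rev m x < rev m y := by
  rw [radInv_eq_rev, radInv_eq_rev, div_lt_div_iff_of_pos_right (by positivity : (0:ℝ) < 2 ^ m)]
  exact Nat.cast_lt

lemma rev_succ_eq (M q : ℕ) (hq : q + 1 < 2 ^ M) :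
    ∃ t, t < M ∧ ∃ R, rev M (q + 1) = 2 ^ (M - t - 1) + R ∧
      rev M q + 2 * 2 ^ (M - t - 1) = 2 ^ M + R := by
  obtain ⟨t, w, hw, hqw⟩ := Nat.exists_eq_pow_mul_and_not_dvd (show q + 1 ≠ 0 by omega) 2 (by norm_num)
  obtain ⟨u, hu⟩ : ∃ u, w = 2 * u + 1 := ⟨w / 2, by omega⟩
  have hps : (2:ℕ) ^ (t+1) = 2 * 2 ^ t := by rw [pow_succ]; ring
  have htpos : (1:ℕ) ≤ 2 ^ t := Nat.one_le_two_pow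
  have hq1 : q + 1 = 2 ^ (t+1) * u + 2 ^ t := by
    rw [hqw, hu, hps]; ring
  have htM : t < M := by
    have h1 : (2:ℕ) ^ t < 2 ^ M := by omega
    exact (Nat.pow_lt_pow_iff_right (by norm_num)).mp h1
  have ht1M : t + 1 ≤ M := htM
  have hmod1 : (q + 1) % 2 ^ (t+1) = 2 ^ t := by
    rw [hq1, Nat.mul_add_mod, Nat.mod_eq_of_lt (by omega)]
  have hdiv1 : (q + 1) / 2 ^ (t+1) = u := by
    rw [hq1, Nat.mul_add_div (by positivity), Nat.div_eq_of_lt (by omega)]; omega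
  have hmod0 : q % 2 ^ (t+1) = 2 ^ t - 1 := by
    have hq0 : q = 2 ^ (t+1) * u + (2 ^ t - 1) := by omega
    rw [hq0, Nat.mul_add_mod, Nat.mod_eq_of_lt (by omega)]
  have hdiv0 : q / 2 ^ (t+1) = u := by
    have hq0 : q = 2 ^ (t+1) * u + (2 ^ t - 1) := by omega
    rw [hq0, Nat.mul_add_div (by positivity), Nat.div_eq_of_lt (by omega)]; omega
  have hs1 := rev_split (t+1) M ht1M (q+1)
  have hs0 := rev_split (t+1) M ht1M q
  rw [hmod1, hdiv1, rev_pow] at hs1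
  rw [hmod0, hdiv0] at hs0
  have hMt : M - (t+1) = M - t - 1 := by omega
  rw [hMt] at hs1 hs0
  refine ⟨t, htM, rev (M - t - 1) u, by omega, ?_⟩
  have hrp := rev_pred_pow t
  have hexp : (2:ℕ) ^ (t+1) * 2 ^ (M - t - 1) = 2 ^ M := by
    rw [← pow_add]; congr 1; omega
  have : (rev (t+1) (2 ^ t - 1) + 2) * 2 ^ (M - t - 1) = 2 ^ M := by rw [hrp, hexp]
  have hexpand : (rev (t+1) (2 ^ t - 1) + 2) * 2 ^ (M - t - 1)
      = rev (t+1) (2 ^ t - 1) * 2 ^ (M - t - 1) + 2 * 2 ^ (M - t - 1) := by ring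
  omega

/-- Gap structure of the radical-inverse values of `2^k` consecutive integers in
`{1,…,2^m−1}`: consecutive gaps lie in
`{1/2^k} ∪ {1/2^{k−1} − 3/2^l : l = k+1,…,m} ∪ {3/2^l : l = k+1,…,m}`, and there are
elements with `φ₂(x) ≤ 2^{−k}` and `1 − φ₂(x') ≤ 2^{−k}`. -/
theorem radInv_gap_structure (m k a : ℕ) (hm : 1 ≤ m) (hk1 : 1 ≤ k) (hkm : k ≤ m - 1)
    (ha1 : 1 ≤ a) (ha2 : a + 2 ^ k ≤ 2 ^ m) :
    (∀ x₁ ∈ Finset.Ico a (a + 2 ^ k), ∀ x₂ ∈ Finset.Ico a (a + 2 ^ k),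
      radInv 2 m x₁ < radInv 2 m x₂ →
      (∀ n ∈ Finset.Ico a (a + 2 ^ k), ¬(radInv 2 m x₁ < radInv 2 m n ∧ radInv 2 m n < radInv 2 m x₂)) →
      (radInv 2 m x₂ - radInv 2 m x₁ = 1 / (2 : ℝ) ^ k ∨
        ∃ l : ℕ, k + 1 ≤ l ∧ l ≤ m ∧
          (radInv 2 m x₂ - radInv 2 m x₁ = 1 / (2 : ℝ) ^ (k - 1) - 3 / (2 : ℝ) ^ l ∨
           radInv 2 m x₂ - radInv 2 m x₁ = 3 / (2 : ℝ) ^ l))) ∧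
    (∃ x ∈ Finset.Ico a (a + 2 ^ k), radInv 2 m x ≤ 1 / (2 : ℝ) ^ k) ∧
    (∃ x' ∈ Finset.Ico a (a + 2 ^ k), 1 - radInv 2 m x' ≤ 1 / (2 : ℝ) ^ k) := by
  obtain ⟨M, hkM, hM1⟩ : ∃ M, m = k + M ∧ 1 ≤ M := ⟨m - k, by omega, by omega⟩
  have hmk : m - k = M := by omega
  have hkm' : k ≤ m := by omega
  have hpowm : (2:ℕ) ^ m = 2 ^ k * 2 ^ M := by rw [← pow_add]; congr 1
  have h2kpos : (0:ℕ) < 2 ^ k := by positivity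
  have hsplit : ∀ x : ℕ, rev m x = rev k (x % 2 ^ k) * 2 ^ M + rev M (x / 2 ^ k) := by
    intro x
    have := rev_split k m hkm' x
    rwa [hmk] at this
  set q := a / 2 ^ k with hqdef
  set r := a % 2 ^ k with hrdef
  have har : 2 ^ k * q + r = a := Nat.div_add_mod a (2 ^ k)
  have hrlt : r < 2 ^ k := Nat.mod_lt a h2kpos
  have hmulq : 2 ^ k * (q + 1) = 2 ^ k * q + 2 ^ k := by ring
  have key : ∀ x, a ≤ x → x < a + 2 ^ k →
      (x / 2 ^ k = q ∨ x / 2 ^ k = q + 1) ∧ 2 ^ k * (x / 2 ^ k) + x % 2 ^ k = x ∧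
        x % 2 ^ k < 2 ^ k := by
    intro x h1 h2
    have hd : 2 ^ k * (x / 2 ^ k) + x % 2 ^ k = x := Nat.div_add_mod x (2 ^ k)
    have hc : x % 2 ^ k < 2 ^ k := Nat.mod_lt x h2kpos
    have hle : q ≤ x / 2 ^ k := Nat.div_le_div_right h1
    have hlt : x / 2 ^ k < q + 2 := by
      rw [Nat.div_lt_iff_lt_mul h2kpos]
      have hex : (q + 2) * 2 ^ k = 2 ^ k * q + 2 ^ k + 2 ^ k := by ring
      omega
    exact ⟨by omega, hd, hc⟩
  refine ⟨?_, ?_, ?_⟩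
  · -- main gap statement
    intro x₁ hx₁ x₂ hx₂ hlt hno
    rw [Finset.mem_Ico] at hx₁ hx₂
    obtain ⟨hk1x, hd1, hc1⟩ := key x₁ hx₁.1 hx₁.2
    obtain ⟨hk2x, hd2, hc2⟩ := key x₂ hx₂.1 hx₂.2
    have E₁ := hsplit x₁
    have E₂ := hsplit x₂
    have hrevlt : rev m x₁ < rev m x₂ := (radInv_lt_iff m x₁ x₂).mp hlt
    have hj1lt : rev k (x₁ % 2 ^ k) < 2 ^ k := rev_lt k _
    have hj2lt : rev k (x₂ % 2 ^ k) < 2 ^ k := rev_lt k _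
    have hR1lt : rev M (x₁ / 2 ^ k) < 2 ^ M := rev_lt M _
    have hR2lt : rev M (x₂ / 2 ^ k) < 2 ^ M := rev_lt M _
    have hjne : rev k (x₁ % 2 ^ k) ≠ rev k (x₂ % 2 ^ k) := by
      intro h
      have hcc : x₁ % 2 ^ k = x₂ % 2 ^ k := rev_inj k _ hc1 _ hc2 h
      have hxx : x₁ = x₂ := by
        rcases hk1x with h1 | h1 <;> rcases hk2x with h2 | h2 <;>
          rw [h1] at hd1 <;> rw [h2] at hd2 <;> omega
      rw [hxx] at hrevlt
      exact lt_irrefl _ hrevlt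
    have hjlt : rev k (x₁ % 2 ^ k) < rev k (x₂ % 2 ^ k) := by
      rcases Nat.lt_or_ge (rev k (x₁ % 2 ^ k)) (rev k (x₂ % 2 ^ k)) with h | h
      · exact h
      · exfalso
        have hmm : (rev k (x₂ % 2 ^ k) + 1) * 2 ^ M ≤ rev k (x₁ % 2 ^ k) * 2 ^ M :=
          Nat.mul_le_mul_right _ (by omega)
        have hex : (rev k (x₂ % 2 ^ k) + 1) * 2 ^ M = rev k (x₂ % 2 ^ k) * 2 ^ M + 2 ^ M := by ring
        omega
    have hjsucc : rev k (x₂ % 2 ^ k) = rev k (x₁ % 2 ^ k) + 1 := by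
      by_contra hcon
      have hgap : rev k (x₁ % 2 ^ k) + 1 < rev k (x₂ % 2 ^ k) := by omega
      obtain ⟨c, hclt, hcrev⟩ := rev_surj k (rev k (x₁ % 2 ^ k) + 1) (by omega)
      obtain ⟨n, hn1, hn2, hnc⟩ := exists_residue a k c hclt
      have En := hsplit n
      rw [hnc, hcrev] at En
      have hRn : rev M (n / 2 ^ k) < 2 ^ M := rev_lt M _
      refine hno n (Finset.mem_Ico.mpr ⟨hn1, hn2⟩) ⟨?_, ?_⟩
      · rw [radInv_lt_iff]
        have hex1 : (rev k (x₁ % 2 ^ k) + 1) * 2 ^ M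
            = rev k (x₁ % 2 ^ k) * 2 ^ M + 2 ^ M := by ring
        omega
      · rw [radInv_lt_iff]
        have hmm : (rev k (x₁ % 2 ^ k) + 2) * 2 ^ M ≤ rev k (x₂ % 2 ^ k) * 2 ^ M :=
          Nat.mul_le_mul_right _ (by omega)
        have hex2 : (rev k (x₁ % 2 ^ k) + 2) * 2 ^ M
            = (rev k (x₁ % 2 ^ k) + 1) * 2 ^ M + 2 ^ M := by ring
        have hex1 : (rev k (x₁ % 2 ^ k) + 1) * 2 ^ M
            = rev k (x₁ % 2 ^ k) * 2 ^ M + 2 ^ M := by ring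
        omega
    rw [hjsucc] at E₂
    have hdiff : radInv 2 m x₂ - radInv 2 m x₁ = ((rev m x₂ : ℝ) - rev m x₁) / 2 ^ m := by
      rw [radInv_eq_rev, radInv_eq_rev, div_sub_div_same]
    have hprm : (2:ℝ) ^ m = 2 ^ k * 2 ^ M := by rw [← pow_add]; congr 1
    rcases hk1x with h1 | h1 <;> rcases hk2x with h2 | h2
    · -- both q : gap 1/2^k
      left
      rw [h1] at E₁; rw [h2] at E₂
      rw [hdiff, E₁, E₂]
      push_cast
      rw [hprm]
      field_simp
      ring
    · -- x₁ ↦ q, x₂ ↦ q+1 : gap 3/2^l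
      have hq1M : q + 1 < 2 ^ M := by
        rw [h2] at hd2
        have hx2m : x₂ < 2 ^ m := by omega
        have : 2 ^ k * (q + 1) < 2 ^ k * 2 ^ M := by omega
        exact Nat.lt_of_mul_lt_mul_left this
      obtain ⟨t, htM, R, hE2n, hE1n⟩ := rev_succ_eq M q hq1M
      refine Or.inr ⟨k + t + 1, by omega, by omega, Or.inr ?_⟩
      rw [h1] at E₁; rw [h2, hE2n] at E₂
      rw [hdiff, E₁, E₂]
      have hc1n : (rev M q : ℝ) + 2 * 2 ^ (M - t - 1) = 2 ^ M + R := by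
        exact_mod_cast congrArg (Nat.cast : ℕ → ℝ) hE1n
      have hrev : (rev M q : ℝ) = 2 ^ M + R - 2 * 2 ^ (M - t - 1) := by linarith
      push_cast
      rw [hrev]
      have em : (2:ℝ) ^ m = 2 ^ (k + t + 1) * 2 ^ (M - t - 1) := by
        rw [← pow_add]; congr 1; omega
      rw [em]
      field_simp
      ring
    · -- x₁ ↦ q+1, x₂ ↦ q : gap 1/2^(k-1) - 3/2^l
      have hq1M : q + 1 < 2 ^ M := by
        rw [h1] at hd1
        have hx1m : x₁ < 2 ^ m := by omega
        have : 2 ^ k * (q + 1) < 2 ^ k * 2 ^ M := by omega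
        exact Nat.lt_of_mul_lt_mul_left this
      obtain ⟨t, htM, R, hE2n, hE1n⟩ := rev_succ_eq M q hq1M
      refine Or.inr ⟨k + t + 1, by omega, by omega, Or.inl ?_⟩
      rw [h1, hE2n] at E₁; rw [h2] at E₂
      rw [hdiff, E₁, E₂]
      have hc1n : (rev M q : ℝ) + 2 * 2 ^ (M - t - 1) = 2 ^ M + R := by
        exact_mod_cast congrArg (Nat.cast : ℕ → ℝ) hE1n
      have hrev : (rev M q : ℝ) = 2 ^ M + R - 2 * 2 ^ (M - t - 1) := by linarith
      push_cast
      rw [hrev]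
      have em : (2:ℝ) ^ m = 2 ^ (k + t + 1) * 2 ^ (M - t - 1) := by
        rw [← pow_add]; congr 1; omega
      have eM : (2:ℝ) ^ M = 2 ^ (t + 1) * 2 ^ (M - t - 1) := by
        rw [← pow_add]; congr 1; omega
      have ek1 : (2:ℝ) ^ k = 2 * 2 ^ (k - 1) := by
        rw [← pow_succ']; congr 1; omega
      have el : (2:ℝ) ^ (k + t + 1) = 2 ^ (k - 1) * 2 * 2 ^ (t + 1) := by
        rw [mul_assoc, ← pow_succ', ← pow_add]; congr 1; omega
      have et : (2:ℝ) ^ (t + 1) = 2 * 2 ^ t := by rw [pow_succ']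
      rw [em, eM, el, et]
      field_simp
      ring
    · -- both q+1 : gap 1/2^k
      left
      rw [h1] at E₁; rw [h2] at E₂
      rw [hdiff, E₁, E₂]
      push_cast
      rw [hprm]
      field_simp
      ring
  · -- small element
    obtain ⟨n, hn1, hn2, hn0⟩ := exists_residue a k 0 h2kpos
    refine ⟨n, Finset.mem_Ico.mpr ⟨hn1, hn2⟩, ?_⟩
    have E := hsplit n
    rw [hn0, rev_zero] at E
    have hb : rev m n < 2 ^ M := by
      have := rev_lt M (n / 2 ^ k)
      omega
    rw [radInv_eq_rev, div_le_div_iff₀ (by positivity) (by positivity), one_mul]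
    have hnat : rev m n * 2 ^ k ≤ 2 ^ m := by
      calc rev m n * 2 ^ k ≤ 2 ^ M * 2 ^ k := Nat.mul_le_mul_right _ (by omega)
        _ = 2 ^ m := by rw [← pow_add]; congr 1; omega
    exact_mod_cast hnat
  · -- large element
    have hc : 2 ^ k - 1 < 2 ^ k := by omega
    obtain ⟨n, hn1, hn2, hnc⟩ := exists_residue a k (2 ^ k - 1) hc
    refine ⟨n, Finset.mem_Ico.mpr ⟨hn1, hn2⟩, ?_⟩
    have E := hsplit n
    rw [hnc] at E
    have hall := rev_all_ones k
    have hx : (rev k (2 ^ k - 1) + 1) * 2 ^ M = 2 ^ k * 2 ^ M := by rw [hall]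
    have hexp : (rev k (2 ^ k - 1) + 1) * 2 ^ M
        = rev k (2 ^ k - 1) * 2 ^ M + 2 ^ M := by ring
    have hge : 2 ^ m ≤ rev m n + 2 ^ M := by omega
    have h1 : (2:ℝ) ^ m ≤ (rev m n : ℝ) + 2 ^ M := by exact_mod_cast hge
    have hpr : (2:ℝ) ^ m = 2 ^ k * 2 ^ M := by rw [← pow_add]; congr 1
    have h2m : (0:ℝ) < 2 ^ m := by positivity
    have h2k : (0:ℝ) < 2 ^ k := by positivity
    have h2M : (0:ℝ) < 2 ^ M := by positivity
    have hkey : (1:ℝ) / 2 ^ k = 2 ^ M / 2 ^ m := by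
      rw [hpr]; field_simp
    rw [radInv_eq_rev, hkey, sub_le_iff_le_add, ← add_div, le_div_iff₀ h2m, one_mul]
    linarith
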